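/- Let I, T, S ≥ 1 be integers and ε ≥ 0. Let ŵ^1, …, ŵ^S ∈ ℝ^{I×T} be samples and Ω := ∏_{i,t} [l_{it}, u_{it}] a box with l_{it} ≤ ŵ^s_{it} ≤ u_{it} for all i, t, s. Let c_t, c⁰_t ∈ ℝ, h(w) := ∑_{t=1}^T ( c_t ∑_{i=1}^I w_{it} + c⁰_t ), and g^c := ∑_{t=1}^T ( c_t (1/S) ∑_{i=1}^I ∑_{s=1}^S ŵ^s_{it} + c⁰_t ). Suppose v^1, …, v^S ∈ ℝ^{I×T} satisfy l_{it} − ŵ^s_{it} ≤ v^s_{it} ≤ u_{it} − ŵ^s_{it} for all i, t, s and (1/S) ∑_{s=1}^S ‖v^s‖₁ ≤ ε. Then the discrete probability measure P := (1/S) ∑_{s=1}^S δ_{ŵ^s + v^s} satisfies P(Ω) = 1, there exists a coupling of P and P_e with transport cost ∫ ‖x − y‖₁ dπ ≤ ε (so d_w(P, P_e) ≤ ε), and ∫ h dP = g^c + (1/S) ∑_{s=1}^S ∑_{t=1}^T c_t ∑_{i=1}^I v^s_{it}. -/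

import Mathlib

open MeasureTheory
open scoped ENNReal

lemma measure_map_finset_sum {α β ι : Type*} [MeasurableSpace α] [MeasurableSpace β]
    {f : α → β} (hf : Measurable f) (s : Finset ι) (μ : ι → Measure α) :
    (∑ i ∈ s, μ i).map f = ∑ i ∈ s, (μ i).map f := by
  ext t ht
  simp only [Measure.map_apply hf ht, Measure.finset_sum_apply]

/-- the achievability direction of Theorem 2. Every feasible
perturbation `v^1, …, v^S` of the samples in the finite reformulation yields a
distribution `P = (1/S) ∑_s δ_{ŵ^s + v^s}` that is supported on the box `Ω`, lies in
the Wasserstein ball of radius `ε` around the empirical distribution (witnessed by a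
coupling of transport cost at most `ε`), and whose expectation of `h` equals
`g^c + (1/S) ∑_{s,t} c_t ∑_i v^s_{it}`. -/
theorem stmt5
    (I T S : ℕ) (hI : 1 ≤ I) (hT : 1 ≤ T) (hS : 1 ≤ S)
    (ε : ℝ) (hε : 0 ≤ ε)
    (what : Fin S → Fin I → Fin T → ℝ)
    (l u : Fin I → Fin T → ℝ)
    (hl : ∀ i t s, l i t ≤ what s i t) (hu : ∀ i t s, what s i t ≤ u i t)
    (c c0 : Fin T → ℝ)
    (gc : ℝ)
    (hgc : gc = ∑ t, (c t * ((1 / (S : ℝ)) * ∑ i, ∑ s, what s i t) + c0 t))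
    (v : Fin S → Fin I → Fin T → ℝ)
    (hv : ∀ i t s, l i t - what s i t ≤ v s i t ∧ v s i t ≤ u i t - what s i t)
    (hvbudget : (1 / (S : ℝ)) * ∑ s, ∑ i, ∑ t, |v s i t| ≤ ε)
    (P : Measure (Fin I → Fin T → ℝ))
    (hP : P = (S : ℝ≥0∞)⁻¹ • ∑ s : Fin S, Measure.dirac (fun i t => what s i t + v s i t)) :
    P {w | ∀ i t, l i t ≤ w i t ∧ w i t ≤ u i t} = 1 ∧
    (∃ π : Measure ((Fin I → Fin T → ℝ) × (Fin I → Fin T → ℝ)),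
      IsProbabilityMeasure π ∧
      π.map Prod.fst = P ∧
      π.map Prod.snd = (S : ℝ≥0∞)⁻¹ • ∑ s : Fin S, Measure.dirac (what s) ∧
      ∫⁻ p, ENNReal.ofReal (∑ i, ∑ t, |p.1 i t - p.2 i t|) ∂π ≤ ENNReal.ofReal ε) ∧
    ∫ w, (∑ t, (c t * ∑ i, w i t + c0 t)) ∂P
      = gc + (1 / (S : ℝ)) * ∑ s, ∑ t, c t * ∑ i, v s i t := by
  have hSR : (S : ℝ) ≠ 0 := by positivity
  have hSE0 : (S : ℝ≥0∞) ≠ 0 := by exact_mod_cast Nat.cast_ne_zero.mpr (by omega)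
  have hSET : (S : ℝ≥0∞) ≠ ∞ := ENNReal.natCast_ne_top S
  have hinvmul : (S : ℝ≥0∞)⁻¹ * (S : ℝ≥0∞) = 1 := ENNReal.inv_mul_cancel hSE0 hSET
  subst hP hgc
  refine ⟨?_, ?_, ?_⟩
  · -- P(Ω) = 1
    rw [Measure.smul_apply, Measure.finset_sum_apply]
    have hmem : ∀ s : Fin S,
        (fun i t => what s i t + v s i t) ∈ {w : Fin I → Fin T → ℝ | ∀ i t, l i t ≤ w i t ∧ w i t ≤ u i t} := by
      intro s i t
      have h1 := (hv i t s).1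
      have h2 := (hv i t s).2
      constructor <;> simp only [] <;> linarith
    have : ∀ s : Fin S, Measure.dirac (fun i t => what s i t + v s i t)
        {w : Fin I → Fin T → ℝ | ∀ i t, l i t ≤ w i t ∧ w i t ≤ u i t} = 1 :=
      fun s => Measure.dirac_apply_of_mem (hmem s)
    simp only [this, Finset.sum_const, Finset.card_univ, Fintype.card_fin, nsmul_eq_mul, mul_one,
      smul_eq_mul]
    exact hinvmul
  · -- the coupling
    refine ⟨(S : ℝ≥0∞)⁻¹ • ∑ s : Fin S,
        Measure.dirac ((fun i t => what s i t + v s i t), what s), ?_, ?_, ?_, ?_⟩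
    · constructor
      simp only [Measure.smul_apply, Measure.finset_sum_apply, measure_univ, Finset.sum_const,
        Finset.card_univ, Fintype.card_fin, nsmul_eq_mul, mul_one, smul_eq_mul]
      exact hinvmul
    · rw [Measure.map_smul, measure_map_finset_sum measurable_fst]
      congr 1
      exact Finset.sum_congr rfl fun s _ => Measure.map_dirac' measurable_fst _
    · rw [Measure.map_smul, measure_map_finset_sum measurable_snd]
      congr 1
      exact Finset.sum_congr rfl fun s _ => Measure.map_dirac' measurable_snd _
    · rw [lintegral_smul_measure, lintegral_finset_sum_measure]
      simp only [lintegral_dirac]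
      have hsimp : ∀ s : Fin S,
          (∑ i, ∑ t, |(what s i t + v s i t) - what s i t|) = ∑ i, ∑ t, |v s i t| := by
        intro s
        refine Finset.sum_congr rfl fun i _ => Finset.sum_congr rfl fun t _ => ?_
        rw [add_sub_cancel_left]
      simp only [hsimp]
      rw [← ENNReal.ofReal_sum_of_nonneg (fun s _ => by positivity)]
      have hinv : (S : ℝ≥0∞)⁻¹ = ENNReal.ofReal (1 / (S : ℝ)) := by
        rw [one_div, ENNReal.ofReal_inv_of_pos (by positivity), ENNReal.ofReal_natCast]
      rw [hinv, smul_eq_mul, ← ENNReal.ofReal_mul (by positivity)]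
      exact ENNReal.ofReal_le_ofReal hvbudget
  · -- the expectation
    have hfm : Measurable (fun w : Fin I → Fin T → ℝ => ∑ t, (c t * ∑ i, w i t + c0 t)) := by
      apply Finset.measurable_sum
      intro t _
      apply Measurable.add_const
      apply Measurable.const_mul
      exact Finset.measurable_sum _ fun i _ => (measurable_pi_apply i).eval
    have hint : ∀ a : Fin I → Fin T → ℝ,
        Integrable (fun w : Fin I → Fin T → ℝ => ∑ t, (c t * ∑ i, w i t + c0 t))
          (Measure.dirac a) := by
      intro a
      refine ⟨hfm.aestronglyMeasurable, ?_⟩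
      simp only [HasFiniteIntegral, lintegral_dirac]
      exact ENNReal.coe_lt_top
    rw [integral_smul_measure, integral_finset_sum_measure (fun s _ => hint _)]
    simp only [integral_dirac]
    have htoReal : ((S : ℝ≥0∞)⁻¹).toReal = (S : ℝ)⁻¹ := by
      simp
    rw [htoReal, smul_eq_mul]
    have hsplit : ∀ s : Fin S,
        (∑ t, (c t * ∑ i, (what s i t + v s i t) + c0 t))
          = (∑ t, (c t * ∑ i, what s i t + c0 t)) + ∑ t, c t * ∑ i, v s i t := by
      intro s
      rw [← Finset.sum_add_distrib]
      refine Finset.sum_congr rfl fun t _ => ?_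
      rw [Finset.sum_add_distrib]
      ring
    simp only [hsplit]
    rw [Finset.sum_add_distrib, mul_add]
    have hfirst : (S : ℝ)⁻¹ * (∑ s : Fin S, ∑ t, (c t * ∑ i, what s i t + c0 t))
        = ∑ t, (c t * ((1 / (S : ℝ)) * ∑ i, ∑ s, what s i t) + c0 t) := by
      rw [Finset.sum_comm, Finset.mul_sum]
      refine Finset.sum_congr rfl fun t _ => ?_
      rw [Finset.sum_add_distrib, ← Finset.mul_sum, Finset.sum_const, Finset.card_univ,
        Fintype.card_fin, nsmul_eq_mul, Finset.sum_comm]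
      field_simp
    rw [hfirst, one_div]
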